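/- For integers m ≥ 1 and n ≥ 2, let Q(m,n) be the graph obtained from K_m by identifying each vertex of K_m with a vertex of its own disjoint copy of K_n. Then the edge Mostar index of Q(m,n) equals (m(n−1)(m−1)/2)·(n² − n + m). -/

import Mathlib

open Finset

section MostarDefs

variable {V : Type*}

/-- Number of vertices of `G` strictly closer to `u` than to `v`. -/
noncomputable def closerCount (G : SimpleGraph V) (u v : V) : ℕ :=
  Nat.card {w : V // G.dist w u < G.dist w v}

/-- Contribution `|n_u - n_v|` of an edge, as a symmetric function on `Sym2 V`. -/
noncomputable def mostarTerm (G : SimpleGraph V) : Sym2 V → ℕ :=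
  Sym2.lift ⟨fun u v => ((closerCount G u v : ℤ) - closerCount G v u).natAbs,
    fun u v => by dsimp only; omega⟩

/-- The Mostar index of a finite graph. -/
noncomputable def mostar (G : SimpleGraph V) [Finite V] : ℕ :=
  letI := Fintype.ofFinite V
  letI := Classical.decEq V
  letI := Classical.decRel G.Adj
  ∑ e ∈ G.edgeFinset, mostarTerm G e

/-- Distance from a vertex `w` to an edge, as min over the endpoints. -/
noncomputable def vertexEdgeDist (G : SimpleGraph V) (w : V) : Sym2 V → ℕ :=
  Sym2.lift ⟨fun x y => min (G.dist x w) (G.dist y w), fun _ _ => min_comm _ _⟩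

/-- Number of edges of `G` strictly closer to `u` than to `v`. -/
noncomputable def edgeCloserCount (G : SimpleGraph V) (u v : V) : ℕ :=
  Nat.card {e : Sym2 V // e ∈ G.edgeSet ∧ vertexEdgeDist G u e < vertexEdgeDist G v e}

/-- Contribution `|m_u - m_v|` of an edge, as a symmetric function on `Sym2 V`. -/
noncomputable def emostarTerm (G : SimpleGraph V) : Sym2 V → ℕ :=
  Sym2.lift ⟨fun u v => ((edgeCloserCount G u v : ℤ) - edgeCloserCount G v u).natAbs,
    fun u v => by dsimp only; omega⟩

/-- The edge Mostar index of a finite graph. -/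
noncomputable def emostar (G : SimpleGraph V) [Finite V] : ℕ :=
  letI := Fintype.ofFinite V
  letI := Classical.decEq V
  letI := Classical.decRel G.Adj
  ∑ e ∈ G.edgeFinset, emostarTerm G e

end MostarDefs

/-- `Q(m,n)`: the complete graph `K_m`, each of whose vertices is identified with a
vertex of its own disjoint copy of `K_n`.  Vertex `(i, 0)` is the `i`-th hub vertex. -/
def Qgraph (m n : ℕ) : SimpleGraph (Fin m × Fin n) where
  Adj p q := (p.1 = q.1 ∧ p.2 ≠ q.2) ∨ (p.2.val = 0 ∧ q.2.val = 0 ∧ p.1 ≠ q.1)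
  symm := by
    constructor
    rintro p q (⟨h1, h2⟩ | ⟨h1, h2, h3⟩)
    · exact Or.inl ⟨h1.symm, h2.symm⟩
    · exact Or.inr ⟨h2, h1, h3.symm⟩
  loopless := by constructor; rintro p (⟨_, h⟩ | ⟨_, _, h⟩) <;> exact h rfl

section Aux
open SimpleGraph

variable {m n : ℕ}

lemma qadj_iff {p q : Fin m × Fin n} :
    (Qgraph m n).Adj p q ↔ (p.1 = q.1 ∧ p.2 ≠ q.2) ∨ (p.2.val = 0 ∧ q.2.val = 0 ∧ p.1 ≠ q.1) :=
  Iff.rfl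

/-- closed form of distance -/
def qd (p q : Fin m × Fin n) : ℕ :=
  if p = q then 0 else if p.1 = q.1 then 1
  else (if p.2.val = 0 then 0 else 1) + 1 + (if q.2.val = 0 then 0 else 1)

lemma reach_tri {V : Type*} {G : SimpleGraph V} {u v w : V} (h1 : G.Reachable u v)
    (h2 : G.Reachable v w) : G.dist u w ≤ G.dist u v + G.dist v w := by
  obtain ⟨p, hp⟩ := h1.exists_walk_length_eq_dist
  obtain ⟨q, hq⟩ := h2.exists_walk_length_eq_dist
  calc G.dist u w ≤ (p.append q).length := dist_le _
    _ = G.dist u v + G.dist v w := by rw [SimpleGraph.Walk.length_append, hp, hq]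

lemma qgraph_dist (p q : Fin m × Fin n) : (Qgraph m n).dist p q = qd p q := by
  by_cases hpq : p = q
  · simp [qd, hpq]
  by_cases h1 : p.1 = q.1
  · have hadj : (Qgraph m n).Adj p q := Or.inl ⟨h1, fun h2 => hpq (Prod.ext h1 h2)⟩
    simp [qd, hpq, h1, dist_eq_one_iff_adj.mpr hadj]
  -- cross copies
  have hz : (0:ℕ) < n := p.2.pos
  set z : Fin n := ⟨0, hz⟩ with hzdef
  have hadjhub : (Qgraph m n).Adj (p.1, z) (q.1, z) := Or.inr ⟨rfl, rfl, h1⟩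
  have spoke : ∀ r : Fin m × Fin n, r.2 ≠ z → (Qgraph m n).Adj r (r.1, z) :=
    fun r hr => Or.inl ⟨rfl, hr⟩
  have hreach : (Qgraph m n).Reachable p q := by
    have r1 : (Qgraph m n).Reachable p (p.1, z) := by
      by_cases h : p.2 = z
      · rw [show p = (p.1, z) from Prod.ext rfl h]
      · exact (spoke p h).reachable
    have r2 : (Qgraph m n).Reachable (q.1, z) q := by
      by_cases h : q.2 = z
      · rw [show q = (q.1, z) from Prod.ext rfl h]
      · exact ((spoke q h).symm).reachable
    exact r1.trans (hadjhub.reachable.trans r2)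
  have hne0 : (Qgraph m n).dist p q ≠ 0 :=
    dist_ne_zero_iff_ne_and_reachable.mpr ⟨hpq, hreach⟩
  have hnadj1 : ∀ x : Fin m × Fin n, x.2.val ≠ 0 → ∀ y, (Qgraph m n).Adj x y → y.1 = x.1 := by
    rintro x hx y (⟨ha, _⟩ | ⟨ha, _, _⟩)
    · exact ha.symm
    · exact absurd ha hx
  -- value by cases on hubness
  have hub2 : ∀ r : Fin m × Fin n, r.2 = z ↔ r.2.val = 0 := by
    intro r; constructor
    · intro h; rw [h]
    · intro h; exact Fin.ext h
  by_cases hp0 : p.2.val = 0 <;> by_cases hq0 : q.2.val = 0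
  · -- both hubs: adjacent
    have : (Qgraph m n).Adj p q := Or.inr ⟨hp0, hq0, h1⟩
    simp [qd, hpq, h1, dist_eq_one_iff_adj.mpr this, hp0, hq0]
  · -- p hub, q not : dist = 2
    have hnadj : ¬ (Qgraph m n).Adj p q := by
      rintro (⟨ha, _⟩ | ⟨_, hb, _⟩) <;> [exact h1 ha; exact hq0 hb]
    have hle : (Qgraph m n).dist p q ≤ 2 := by
      have hpz : p = (p.1, z) := Prod.ext rfl ((hub2 p).mpr hp0)
      calc (Qgraph m n).dist p q ≤ (Qgraph m n).dist p (q.1, z) + (Qgraph m n).dist (q.1, z) q :=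
            reach_tri (hpz ▸ hadjhub.reachable) ((spoke q (fun h => hq0 (by rw [h]))).symm).reachable
        _ ≤ 1 + 1 := by
            gcongr
            · rw [hpz]; exact (dist_eq_one_iff_adj.mpr hadjhub).le
            · exact (dist_eq_one_iff_adj.mpr ((spoke q (fun h => hq0 (by rw [h]))).symm)).le
    have hne1 : (Qgraph m n).dist p q ≠ 1 := fun h => hnadj (dist_eq_one_iff_adj.mp h)
    simp only [qd, if_neg hpq, if_neg h1, if_pos hp0, if_neg hq0]
    omega
  · -- q hub, p not : dist = 2 (symmetric)
    have hnadj : ¬ (Qgraph m n).Adj p q := by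
      rintro (⟨ha, _⟩ | ⟨hb, _, _⟩) <;> [exact h1 ha; exact hp0 hb]
    have hle : (Qgraph m n).dist p q ≤ 2 := by
      have hqz : q = (q.1, z) := Prod.ext rfl ((hub2 q).mpr hq0)
      calc (Qgraph m n).dist p q ≤ (Qgraph m n).dist p (p.1, z) + (Qgraph m n).dist (p.1, z) q :=
            reach_tri (spoke p (fun h => hp0 (by rw [h]))).reachable (hqz ▸ hadjhub.reachable)
        _ ≤ 1 + 1 := by
            gcongr
            · exact (dist_eq_one_iff_adj.mpr (spoke p (fun h => hp0 (by rw [h])))).le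
            · rw [hqz]; exact (dist_eq_one_iff_adj.mpr hadjhub).le
    have hne1 : (Qgraph m n).dist p q ≠ 1 := fun h => hnadj (dist_eq_one_iff_adj.mp h)
    simp only [qd, if_neg hpq, if_neg h1, if_neg hp0, if_pos hq0]
    omega
  · -- neither hub : dist = 3
    have hle : (Qgraph m n).dist p q ≤ 3 := by
      calc (Qgraph m n).dist p q
          ≤ (Qgraph m n).dist p (p.1, z) + (Qgraph m n).dist (p.1, z) q :=
            reach_tri (spoke p (fun h => hp0 (by rw [h]))).reachable
              (hadjhub.reachable.trans ((spoke q (fun h => hq0 (by rw [h]))).symm).reachable)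
        _ ≤ (Qgraph m n).dist p (p.1, z) + ((Qgraph m n).dist (p.1, z) (q.1, z)
            + (Qgraph m n).dist (q.1, z) q) :=
            Nat.add_le_add_left (reach_tri hadjhub.reachable
              ((spoke q (fun h => hq0 (by rw [h]))).symm).reachable) _
        _ ≤ 1 + (1 + 1) := by
            gcongr
            · exact (dist_eq_one_iff_adj.mpr (spoke p (fun h => hp0 (by rw [h])))).le
            · exact (dist_eq_one_iff_adj.mpr hadjhub).le
            · exact (dist_eq_one_iff_adj.mpr ((spoke q (fun h => hq0 (by rw [h]))).symm)).le
    have hnadj : ¬ (Qgraph m n).Adj p q := by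
      rintro (⟨ha, _⟩ | ⟨hb, _, _⟩) <;> [exact h1 ha; exact hp0 hb]
    have hne1 : (Qgraph m n).dist p q ≠ 1 := fun h => hnadj (dist_eq_one_iff_adj.mp h)
    have hne2 : (Qgraph m n).dist p q ≠ 2 := by
      intro h2
      obtain ⟨w, hw⟩ := exists_walk_of_dist_ne_zero hne0
      rw [h2] at hw
      match w, hw with
      | SimpleGraph.Walk.cons h (SimpleGraph.Walk.cons h' SimpleGraph.Walk.nil), _ =>
        rename_i x _
        have e1 := hnadj1 p hp0 x h
        have e2 := hnadj1 q hq0 x h'.symm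
        exact h1 (e1.symm.trans e2)
    simp only [qd, if_neg hpq, if_neg h1, if_neg hp0, if_neg hq0]
    omega

-- Part 2: iso invariance
section Iso
variable {V : Type*} {G : SimpleGraph V}

lemma iso_dist (φ : G ≃g G) (u v : V) : G.dist (φ u) (φ v) = G.dist u v := by
  have key : ∀ (ψ : G ≃g G) (a b : V), G.Reachable a b → G.dist (ψ a) (ψ b) ≤ G.dist a b := by
    intro ψ a b h
    obtain ⟨p, hp⟩ := h.exists_walk_length_eq_dist
    calc G.dist (ψ a) (ψ b) ≤ (p.map ψ.toHom).length := dist_le _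
      _ = G.dist a b := by rw [SimpleGraph.Walk.length_map, hp]
  by_cases h : G.Reachable u v
  · refine le_antisymm (key φ u v h) ?_
    have h2 : G.Reachable (φ u) (φ v) := by
      obtain ⟨p⟩ := h; exact ⟨p.map φ.toHom⟩
    have := key φ.symm (φ u) (φ v) h2
    simpa using this
  · have h2 : ¬ G.Reachable (φ u) (φ v) := by
      intro ⟨p⟩
      exact h (by have := p.map φ.symm.toHom; simpa using this.reachable)
    rw [SimpleGraph.dist_eq_zero_of_not_reachable h, SimpleGraph.dist_eq_zero_of_not_reachable h2]

def sym2MapEquiv (φ : V ≃ V) : Sym2 V ≃ Sym2 V where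
  toFun := Sym2.map φ
  invFun := Sym2.map φ.symm
  left_inv e := by rw [Sym2.map_map]; simp
  right_inv e := by rw [Sym2.map_map]; simp

lemma vertexEdgeDist_map (φ : G ≃g G) (w : V) (e : Sym2 V) :
    vertexEdgeDist G (φ w) (Sym2.map φ e) = vertexEdgeDist G w e := by
  induction e using Sym2.ind with
  | _ x y => simp [vertexEdgeDist, Sym2.map_pair_eq, iso_dist φ, iso_dist φ x w]

end Iso

section Iso2
variable {V : Type*} {G : SimpleGraph V}

lemma edgeCloserCount_iso (φ : G ≃g G) (u v : V) :
    edgeCloserCount G (φ u) (φ v) = edgeCloserCount G u v := by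
  refine (Nat.card_congr (Equiv.subtypeEquiv (sym2MapEquiv φ.toEquiv) fun e => ?_)).symm
  constructor
  · rintro ⟨h1, h2⟩
    refine ⟨?_, ?_⟩
    · exact SimpleGraph.Iso.map_mem_edgeSet_iff φ |>.mpr h1
    · show vertexEdgeDist G (φ u) (Sym2.map φ e) < vertexEdgeDist G (φ v) (Sym2.map φ e)
      rwa [vertexEdgeDist_map, vertexEdgeDist_map]
  · rintro ⟨h1, h2⟩
    refine ⟨(SimpleGraph.Iso.map_mem_edgeSet_iff φ).mp h1, ?_⟩
    have h2' : vertexEdgeDist G (φ u) (Sym2.map φ e) < vertexEdgeDist G (φ v) (Sym2.map φ e) := h2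
    rwa [vertexEdgeDist_map, vertexEdgeDist_map] at h2'

lemma emostarTerm_eq_zero_of_swap (φ : G ≃g G) {u v : V} (hu : φ u = v) (hv : φ v = u) :
    emostarTerm G s(u, v) = 0 := by
  have h := edgeCloserCount_iso φ u v
  rw [hu, hv] at h
  simp only [emostarTerm, Sym2.lift_mk]
  omega

end Iso2

-- Part 4: automorphisms of Qgraph
section Autos
variable {m n : ℕ}

def copySwapFun (i : Fin m) (σ : Equiv.Perm (Fin n)) (p : Fin m × Fin n) : Fin m × Fin n :=
  if p.1 = i then (p.1, σ p.2) else p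

lemma copySwap_invol (i : Fin m) (σ : Equiv.Perm (Fin n)) (hσ : Function.Involutive σ) :
    Function.Involutive (copySwapFun i σ) := by
  intro p
  unfold copySwapFun
  by_cases h : p.1 = i
  · rw [if_pos h]; dsimp only; rw [if_pos h, hσ p.2]
  · simp only [h, if_false, if_neg, not_false_iff]

/-- Automorphism permuting the non-hub vertices of copy `i`. -/
def copyAuto (i : Fin m) (σ : Equiv.Perm (Fin n)) (hσ : Function.Involutive σ)
    (h0 : ∀ c : Fin n, (σ c).val = 0 ↔ c.val = 0) : Qgraph m n ≃g Qgraph m n where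
  toEquiv := (copySwap_invol i σ hσ).toPerm
  map_rel_iff' := by
    intro p q
    show (Qgraph m n).Adj (copySwapFun i σ p) (copySwapFun i σ q) ↔ (Qgraph m n).Adj p q
    unfold copySwapFun
    by_cases hp : p.1 = i <;> by_cases hq : q.1 = i
    · simp [qadj_iff, hp, hq, h0, σ.injective.eq_iff, Ne]
    · have hq' : ¬ i = q.1 := fun h => hq h.symm
      simp [qadj_iff, hp, hq, hq', h0]
    · have hp' : ¬ i = p.1 := fun h => hp h.symm
      simp [qadj_iff, hp, hq, hp', h0]
    · simp [qadj_iff, hp, hq, h0]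

end Autos

section Autos2
variable {m n : ℕ}

/-- Automorphism permuting the copies. -/
def hubAuto (τ : Equiv.Perm (Fin m)) : Qgraph m n ≃g Qgraph m n where
  toEquiv := Equiv.prodCongr τ (Equiv.refl (Fin n))
  map_rel_iff' := by
    intro p q
    show (Qgraph m n).Adj (τ p.1, p.2) (τ q.1, q.2) ↔ (Qgraph m n).Adj p q
    simp [qadj_iff, τ.injective.eq_iff, Ne]

end Autos2

-- Part 5: distance evals
section Evals
variable {m n : ℕ} [NeZero n] {i : Fin m} {b : Fin n}

lemma fv0 {n : ℕ} [NeZero n] (c : Fin n) : c.val = 0 ↔ c = 0 := by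
  constructor
  · intro h; exact Fin.ext (by simpa using h)
  · rintro rfl; simp

lemma qdu (w : Fin m × Fin n) : qd w (i, (0:Fin n)) =
    if w.1 = i then (if w.2 = 0 then 0 else 1) else (if w.2 = 0 then 1 else 2) := by
  unfold qd
  by_cases h1 : w.1 = i <;> by_cases h2 : w.2 = 0 <;>
    simp [Prod.ext_iff, h1, h2, fv0]

lemma qdv (hb : b ≠ 0) (w : Fin m × Fin n) : qd w (i, b) =
    if w.1 = i then (if w.2 = b then 0 else 1) else (if w.2 = 0 then 2 else 3) := by
  have hbv : ¬ (b.val = 0) := fun h => hb (Fin.ext h)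
  unfold qd
  by_cases h1 : w.1 = i <;> by_cases h2 : w.2 = b <;> by_cases h3 : w.2 = 0 <;>
    simp [Prod.ext_iff, h1, h2, h3, fv0, hbv, hb]

end Evals

-- Part 6: counting
lemma nat_card_eq {α : Type*} (p : α → Prop) (S : Finset α) (h : ∀ x, p x ↔ x ∈ S) :
    Nat.card {x // p x} = S.card := by
  rw [Nat.card_congr (Equiv.subtypeEquivRight h), Nat.card_eq_fintype_card, Fintype.card_coe]

section Counting
variable {m n : ℕ} [NeZero n] (i : Fin m) (b : Fin n)

open scoped Classical in
lemma countA (hb : b ≠ 0) :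
    edgeCloserCount (Qgraph m n) (i, b) (i, (0:Fin n)) = n - 2 := by
  rw [edgeCloserCount]
  have hset : ∀ e : Sym2 (Fin m × Fin n),
      (e ∈ (Qgraph m n).edgeSet ∧ vertexEdgeDist (Qgraph m n) (i, b) e
        < vertexEdgeDist (Qgraph m n) (i, (0:Fin n)) e)
      ↔ e ∈ (Finset.univ.filter fun c : Fin n => ¬(c = 0 ∨ c = b)).image
          (fun c => s(((i, b) : Fin m × Fin n), (i, c))) := by
    intro e
    induction e using Sym2.ind with
    | _ x y =>
      simp only [Finset.mem_filter, Finset.mem_univ, true_and, Finset.mem_image,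
        SimpleGraph.mem_edgeSet, vertexEdgeDist, Sym2.lift_mk]
      rw [qgraph_dist, qgraph_dist, qgraph_dist, qgraph_dist, qdv hb, qdv hb, qdu, qdu]
      constructor
      · rintro ⟨hadj, hlt⟩
        rcases hadj with ⟨h1, h2⟩ | ⟨h1, h2, h3⟩
        · -- copy edge
          by_cases hk : x.1 = i
          · have hky : y.1 = i := h1 ▸ hk
            simp only [hk, hky, if_true] at hlt
            by_cases hxb : x.2 = b
            · refine ⟨y.2, ?_, ?_⟩
              · push_neg
                constructor
                · intro hy0
                  simp [hxb, hy0, hb] at hlt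
                · intro hyb
                  exact h2 (hxb.trans hyb.symm)
              · rw [show x = ((i, b) : Fin m × Fin n) from Prod.ext hk hxb,
                  show y = ((i, y.2) : Fin m × Fin n) from Prod.ext hky rfl]
            · by_cases hyb : y.2 = b
              · refine ⟨x.2, ?_, ?_⟩
                · push_neg
                  refine ⟨fun hx0 => by simp [hxb, hyb, hx0, hb] at hlt, hxb⟩
                · rw [show y = ((i, b) : Fin m × Fin n) from Prod.ext hky hyb,
                    show x = ((i, x.2) : Fin m × Fin n) from Prod.ext hk rfl, Sym2.eq_swap]
              · simp [hxb, hyb] at hlt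
                split_ifs at hlt <;> omega
          · have hky : ¬ y.1 = i := h1 ▸ hk
            simp only [hk, hky, if_false] at hlt
            split_ifs at hlt <;> omega
        · -- hub edge
          have hx0 : x.2 = 0 := fv0 x.2 |>.mp h1
          have hy0 : y.2 = 0 := fv0 y.2 |>.mp h2
          exfalso
          by_cases hk : x.1 = i <;> by_cases hky : y.1 = i <;>
            simp [hk, hky, hx0, hy0, hb.symm, (fun h => hb h.symm : ¬ (0:Fin n) = b)] at hlt
      · rintro ⟨c, hc, hce⟩
        push_neg at hc
        obtain ⟨hc0, hcb⟩ := hc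
        have hxy : (x = (i, b) ∧ y = (i, c)) ∨ (x = (i, c) ∧ y = (i, b)) := by
          rw [Sym2.eq_iff] at hce
          tauto
        constructor
        · rcases hxy with ⟨hx, hy⟩ | ⟨hx, hy⟩ <;>
            exact Or.inl (by rw [hx, hy]; simp [Ne, Prod.ext_iff]; tauto)
        · rcases hxy with ⟨hx, hy⟩ | ⟨hx, hy⟩ <;>
            simp [hx, hy, hb, hc0, hcb, Ne.symm hcb]
  rw [nat_card_eq _ _ hset, Finset.card_image_of_injective, Finset.filter_not]
  · rw [Finset.card_sdiff_of_subset (Finset.filter_subset _ _)]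
    have : (Finset.univ.filter fun c : Fin n => c = 0 ∨ c = b) = {0, b} := by
      ext c; simp [Finset.mem_insert]
    rw [this, Finset.card_pair (Ne.symm hb), Finset.card_univ, Fintype.card_fin]
  · intro c d hcd
    rw [Sym2.eq_iff] at hcd
    rcases hcd with ⟨_, h⟩ | ⟨h1, h2⟩
    · exact (Prod.ext_iff.mp h).2
    · exact ((Prod.ext_iff.mp h2).2).trans ((Prod.ext_iff.mp h1).2)
end Counting

-- Part 7: membership helpers and countB
section CountB
variable {m n : ℕ} [NeZero n] (i j : Fin m) (b : Fin n)

lemma mem_hubImage [DecidableEq (Fin m × Fin n)] (x y : Fin m × Fin n) :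
    s(x,y) ∈ ((⊤ : SimpleGraph (Fin m)).edgeFinset).image (Sym2.map (fun k => (k, (0:Fin n))))
    ↔ x.2 = 0 ∧ y.2 = 0 ∧ x.1 ≠ y.1 := by
  rw [Finset.mem_image]
  constructor
  · rintro ⟨a, ha, hae⟩
    induction a using Sym2.ind with
    | _ k l =>
      rw [SimpleGraph.mem_edgeFinset, SimpleGraph.mem_edgeSet, SimpleGraph.top_adj] at ha
      rw [Sym2.map_pair_eq, Sym2.eq_iff] at hae
      rcases hae with ⟨h1, h2⟩ | ⟨h1, h2⟩
      · subst h1; subst h2; exact ⟨rfl, rfl, ha⟩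
      · subst h1; subst h2; exact ⟨rfl, rfl, fun h => ha h.symm⟩
  · rintro ⟨hx, hy, hne⟩
    refine ⟨s(x.1, y.1), ?_, ?_⟩
    · rw [SimpleGraph.mem_edgeFinset, SimpleGraph.mem_edgeSet, SimpleGraph.top_adj]
      exact hne
    · rw [Sym2.map_pair_eq]
      rw [show ((x.1, (0:Fin n)) : Fin m × Fin n) = x from Prod.ext rfl hx.symm,
        show ((y.1, (0:Fin n)) : Fin m × Fin n) = y from Prod.ext rfl hy.symm]

lemma mem_copyImage [DecidableEq (Fin m × Fin n)] (x y : Fin m × Fin n) :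
    s(x,y) ∈ ((⊤ : SimpleGraph (Fin n)).edgeFinset).image (Sym2.map (fun c => (j, c)))
    ↔ x.1 = j ∧ y.1 = j ∧ x.2 ≠ y.2 := by
  rw [Finset.mem_image]
  constructor
  · rintro ⟨a, ha, hae⟩
    induction a using Sym2.ind with
    | _ c d =>
      rw [SimpleGraph.mem_edgeFinset, SimpleGraph.mem_edgeSet, SimpleGraph.top_adj] at ha
      rw [Sym2.map_pair_eq, Sym2.eq_iff] at hae
      rcases hae with ⟨h1, h2⟩ | ⟨h1, h2⟩
      · subst h1; subst h2; exact ⟨rfl, rfl, ha⟩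
      · subst h1; subst h2; exact ⟨rfl, rfl, fun h => ha h.symm⟩
  · rintro ⟨hx, hy, hne⟩
    refine ⟨s(x.2, y.2), ?_, ?_⟩
    · rw [SimpleGraph.mem_edgeFinset, SimpleGraph.mem_edgeSet, SimpleGraph.top_adj]
      exact hne
    · rw [Sym2.map_pair_eq]
      rw [show ((j, x.2) : Fin m × Fin n) = x from Prod.ext hx.symm rfl,
        show ((j, y.2) : Fin m × Fin n) = y from Prod.ext hy.symm rfl]

end CountB

section CountB2
variable {m n : ℕ} [NeZero n] (i : Fin m) (b : Fin n)

lemma mem_spokeImage [DecidableEq (Fin m × Fin n)] (x y : Fin m × Fin n) :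
    s(x,y) ∈ (Finset.univ.filter fun c : Fin n => ¬(c = 0 ∨ c = b)).image
        (fun c => s(((i, (0:Fin n)) : Fin m × Fin n), (i, c)))
    ↔ (x = (i,0) ∧ y.1 = i ∧ y.2 ≠ 0 ∧ y.2 ≠ b) ∨
      (y = (i,0) ∧ x.1 = i ∧ x.2 ≠ 0 ∧ x.2 ≠ b) := by
  rw [Finset.mem_image]
  constructor
  · rintro ⟨c, hc, hce⟩
    rw [Finset.mem_filter] at hc
    obtain ⟨-, hc⟩ := hc
    push_neg at hc
    rw [Sym2.eq_iff] at hce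
    rcases hce with ⟨h1, h2⟩ | ⟨h1, h2⟩
    · subst h1; subst h2; exact Or.inl ⟨rfl, rfl, hc.1, hc.2⟩
    · subst h1; subst h2; exact Or.inr ⟨rfl, rfl, hc.1, hc.2⟩
  · rintro (⟨hx, hy1, hy2, hy3⟩ | ⟨hy, hx1, hx2, hx3⟩)
    · refine ⟨y.2, ?_, ?_⟩
      · rw [Finset.mem_filter]
        refine ⟨Finset.mem_univ _, ?_⟩
        push_neg
        exact ⟨hy2, hy3⟩
      · rw [show ((i, y.2) : Fin m × Fin n) = y from Prod.ext hy1.symm rfl, ← hx]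
    · refine ⟨x.2, ?_, ?_⟩
      · rw [Finset.mem_filter]
        refine ⟨Finset.mem_univ _, ?_⟩
        push_neg
        exact ⟨hx2, hx3⟩
      · rw [show ((i, x.2) : Fin m × Fin n) = x from Prod.ext hx1.symm rfl, ← hy, Sym2.eq_swap]

open scoped Classical in
lemma countB (hb : b ≠ 0) :
    edgeCloserCount (Qgraph m n) (i, (0:Fin n)) (i, b)
      = m.choose 2 + (m - 1) * n.choose 2 + (n - 2) := by
  rw [edgeCloserCount]
  set S1 : Finset (Sym2 (Fin m × Fin n)) :=
    ((⊤ : SimpleGraph (Fin m)).edgeFinset).image (Sym2.map (fun k => (k, (0:Fin n)))) with hS1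
  set S2 : Finset (Sym2 (Fin m × Fin n)) :=
    (Finset.univ.filter (fun j : Fin m => j ≠ i)).biUnion
      (fun j => ((⊤ : SimpleGraph (Fin n)).edgeFinset).image (Sym2.map (fun c => (j, c)))) with hS2
  set S3 : Finset (Sym2 (Fin m × Fin n)) :=
    (Finset.univ.filter fun c : Fin n => ¬(c = 0 ∨ c = b)).image
      (fun c => s(((i, (0:Fin n)) : Fin m × Fin n), (i, c))) with hS3
  have hmem2 : ∀ e : Sym2 (Fin m × Fin n), e ∈ S2 ↔
      ∃ j, j ≠ i ∧ e ∈ ((⊤ : SimpleGraph (Fin n)).edgeFinset).image (Sym2.map (fun c => (j, c))) := by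
    intro e
    rw [hS2, Finset.mem_biUnion]
    constructor
    · rintro ⟨j, hj, hje⟩
      exact ⟨j, (Finset.mem_filter.mp hj).2, hje⟩
    · rintro ⟨j, hj, hje⟩
      exact ⟨j, Finset.mem_filter.mpr ⟨Finset.mem_univ _, hj⟩, hje⟩
  have hset : ∀ e : Sym2 (Fin m × Fin n),
      (e ∈ (Qgraph m n).edgeSet ∧ vertexEdgeDist (Qgraph m n) (i, (0:Fin n)) e
        < vertexEdgeDist (Qgraph m n) (i, b) e)
      ↔ e ∈ S1 ∪ S2 ∪ S3 := by
    intro e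
    induction e using Sym2.ind with
    | _ x y =>
      simp only [Finset.mem_union, SimpleGraph.mem_edgeSet, vertexEdgeDist, Sym2.lift_mk,
        hmem2, hS1, hS3, mem_hubImage, mem_copyImage, mem_spokeImage]
      rw [qgraph_dist, qgraph_dist, qgraph_dist, qgraph_dist, qdv hb, qdv hb, qdu, qdu]
      constructor
      · rintro ⟨hadj, hlt⟩
        rcases hadj with ⟨h1, h2⟩ | ⟨h1, h2, h3⟩
        · -- copy edge in copy x.1
          by_cases hk : x.1 = i
          · -- copy i : spoke case
            have hky : y.1 = i := h1 ▸ hk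
            simp only [hk, hky, if_true] at hlt
            refine Or.inr ?_
            by_cases hx0 : x.2 = 0
            · refine Or.inl ⟨Prod.ext hk hx0, hky, ?_, ?_⟩
              · exact fun h => h2 (hx0.trans h.symm)
              · intro hyb
                simp [hx0, hyb, (fun h => hb h.symm : ¬ (0:Fin n) = b), hb] at hlt
            · by_cases hy0 : y.2 = 0
              · refine Or.inr ⟨Prod.ext hky hy0, hk, hx0, ?_⟩
                · intro hxb
                  simp [hy0, hxb, (fun h => hb h.symm : ¬ (0:Fin n) = b), hb] at hlt
              · exfalso
                simp [hx0, hy0] at hlt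
                split_ifs at hlt <;> omega
          · -- copy j ≠ i
            have hky : ¬ y.1 = i := h1 ▸ hk
            exact Or.inl (Or.inr ⟨x.1, hk, rfl, h1.symm, h2⟩)
        · -- hub edge
          exact Or.inl (Or.inl ⟨(fv0 x.2).mp h1, (fv0 y.2).mp h2, h3⟩)
      · rintro ((⟨hx0, hy0, hne⟩ | ⟨j, hj, hx1, hy1, hne⟩) | hsp)
        · -- hub edge
          refine ⟨Or.inr ⟨(fv0 x.2).mpr hx0, (fv0 y.2).mpr hy0, hne⟩, ?_⟩
          have h0b : ¬ ((0:Fin n) = b) := fun h => hb h.symm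
          by_cases hk : x.1 = i <;> by_cases hky : y.1 = i <;>
            simp [hk, hky, hx0, hy0, h0b] <;> omega
        · -- copy j edge
          have hky : ¬ y.1 = i := hy1 ▸ hj
          have hkx : ¬ x.1 = i := hx1 ▸ hj
          refine ⟨Or.inl ⟨hx1.trans hy1.symm, hne⟩, ?_⟩
          simp only [hkx, hky, if_false]
          split_ifs <;> omega
        · -- spoke
          rcases hsp with ⟨hx, hy1, hy2, hy3⟩ | ⟨hy, hx1, hx2, hx3⟩
          · subst hx
            have h0b : ¬ ((0:Fin n) = b) := fun h => hb h.symm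
            refine ⟨Or.inl ⟨hy1.symm, fun h => hy2 h.symm⟩, ?_⟩
            simp [hy1, hy2, hy3, h0b]
          · subst hy
            have h0b : ¬ ((0:Fin n) = b) := fun h => hb h.symm
            refine ⟨Or.inl ⟨hx1, hx2⟩, ?_⟩
            simp [hx1, hx2, hx3, h0b]
  rw [nat_card_eq _ _ hset]
  have hinj1 : Function.Injective (fun k : Fin m => ((k, (0:Fin n)) : Fin m × Fin n)) :=
    fun a b h => (Prod.ext_iff.mp h).1
  have d12 : Disjoint S1 S2 := by
    rw [Finset.disjoint_left]
    intro e he1 he2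
    induction e using Sym2.ind with
    | _ x y =>
      rw [hS1, mem_hubImage] at he1
      rw [hmem2] at he2
      obtain ⟨j, hj, hje⟩ := he2
      rw [mem_copyImage] at hje
      exact he1.2.2 (hje.1.trans hje.2.1.symm)
  have d123 : Disjoint (S1 ∪ S2) S3 := by
    rw [Finset.disjoint_left]
    intro e he1 he2
    induction e using Sym2.ind with
    | _ x y =>
      rw [hS3, mem_spokeImage] at he2
      rw [Finset.mem_union] at he1
      rcases he1 with he1 | he1
      · rw [hS1, mem_hubImage] at he1
        rcases he2 with ⟨hx, hy1, hy2, _⟩ | ⟨hy, hx1, hx2, _⟩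
        · exact hy2 he1.2.1
        · exact hx2 he1.1
      · rw [hmem2] at he1
        obtain ⟨j, hj, hje⟩ := he1
        rw [mem_copyImage] at hje
        rcases he2 with ⟨hx, -⟩ | ⟨hy, -⟩
        · exact hj (hje.1.symm.trans (by rw [hx]))
        · exact hj (hje.2.1.symm.trans (by rw [hy]))
  rw [Finset.card_union_of_disjoint d123, Finset.card_union_of_disjoint d12]
  have c1 : S1.card = m.choose 2 := by
    rw [hS1, Finset.card_image_of_injective _ (Sym2.map.injective hinj1),
      SimpleGraph.card_edgeFinset_top_eq_card_choose_two, Fintype.card_fin]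
  have c2 : S2.card = (m - 1) * n.choose 2 := by
    rw [hS2, Finset.card_biUnion]
    · have : ∀ j ∈ Finset.univ.filter (fun j : Fin m => j ≠ i),
          (((⊤ : SimpleGraph (Fin n)).edgeFinset).image (Sym2.map (fun c => (j, c)))).card
            = n.choose 2 := by
        intro j _
        rw [Finset.card_image_of_injective _
          (Sym2.map.injective (fun a b h => (Prod.ext_iff.mp h).2)),
          SimpleGraph.card_edgeFinset_top_eq_card_choose_two, Fintype.card_fin]
      rw [Finset.sum_congr rfl this, Finset.sum_const, Finset.filter_ne',
        Finset.card_erase_of_mem (Finset.mem_univ _), Finset.card_univ, Fintype.card_fin,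
        smul_eq_mul]
    · intro a _ c _ hac
      rw [Function.onFun, Finset.disjoint_left]
      intro e he1 he2
      induction e using Sym2.ind with
      | _ x y =>
        rw [mem_copyImage] at he1 he2
        exact hac (he1.1.symm.trans he2.1)
  have c3 : S3.card = n - 2 := by
    rw [hS3, Finset.card_image_of_injective, Finset.filter_not]
    · rw [Finset.card_sdiff_of_subset (Finset.filter_subset _ _)]
      have : (Finset.univ.filter fun c : Fin n => c = 0 ∨ c = b) = {0, b} := by
        ext c; simp [Finset.mem_insert]
      rw [this, Finset.card_pair hb.symm, Finset.card_univ, Fintype.card_fin]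
    · intro c d hcd
      rw [Sym2.eq_iff] at hcd
      rcases hcd with ⟨_, h⟩ | ⟨h1, h2⟩
      · exact (Prod.ext_iff.mp h).2
      · exact ((Prod.ext_iff.mp h2).2).trans (Prod.ext_iff.mp h1).2
  rw [c1, c2, c3]

end CountB2

-- Part 8: final assembly
lemma swap_val0 {n : ℕ} [NeZero n] {a b : Fin n} (ha : a ≠ 0) (hb : b ≠ 0) (c : Fin n) :
    ((Equiv.swap a b) c).val = 0 ↔ c.val = 0 := by
  rw [fv0, fv0]
  constructor
  · intro h
    by_contra hc
    have : Equiv.swap a b c = Equiv.swap a b 0 := by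
      rw [h, Equiv.swap_apply_of_ne_of_ne (Ne.symm ha) (Ne.symm hb)]
    exact hc ((Equiv.swap a b).injective this)
  · rintro rfl
    exact Equiv.swap_apply_of_ne_of_ne (Ne.symm ha) (Ne.symm hb)


end Aux

open SimpleGraph in
theorem emostar_Qgraph (m n : ℕ) (hm : 1 ≤ m) (hn : 2 ≤ n) :
    emostar (Qgraph m n) = m * (n - 1) * (m - 1) * (n ^ 2 - n + m) / 2 := by
  classical
  haveI : NeZero n := ⟨by omega⟩
  have hsum : emostar (Qgraph m n)
      = ∑ e ∈ (Qgraph m n).edgeFinset, emostarTerm (Qgraph m n) e := by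
    unfold emostar
    refine Finset.sum_congr ?_ (fun _ _ => rfl)
    ext e
    simp only [SimpleGraph.mem_edgeFinset]
  rw [hsum]
  set T := m.choose 2 + (m-1) * n.choose 2 with hT
  set spokes : Finset (Sym2 (Fin m × Fin n)) :=
    (Finset.univ.filter fun x : Fin m × Fin n => x.2 ≠ 0).image
      (fun x => s(((x.1, (0:Fin n)) : Fin m × Fin n), x)) with hspokes
  have hmemsp : ∀ x y : Fin m × Fin n, s(x,y) ∈ spokes ↔
      (x = (y.1, 0) ∧ y.2 ≠ 0) ∨ (y = (x.1, 0) ∧ x.2 ≠ 0) := by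
    intro x y
    rw [hspokes, Finset.mem_image]
    constructor
    · rintro ⟨a, ha, he⟩
      rw [Finset.mem_filter] at ha
      rw [Sym2.eq_iff] at he
      rcases he with ⟨h1, h2⟩ | ⟨h1, h2⟩
      · subst h2; exact Or.inl ⟨h1.symm, ha.2⟩
      · subst h2; exact Or.inr ⟨h1.symm, ha.2⟩
    · rintro (⟨hx, hy⟩ | ⟨hy, hx⟩)
      · exact ⟨y, Finset.mem_filter.mpr ⟨Finset.mem_univ _, hy⟩, by rw [← hx]⟩
      · exact ⟨x, Finset.mem_filter.mpr ⟨Finset.mem_univ _, hx⟩, by rw [← hy, Sym2.eq_swap]⟩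
  have hsub : spokes ⊆ (Qgraph m n).edgeFinset := by
    intro e he
    induction e using Sym2.ind with
    | _ x y =>
      rw [hmemsp] at he
      rw [SimpleGraph.mem_edgeFinset, SimpleGraph.mem_edgeSet]
      rcases he with ⟨hx, hy⟩ | ⟨hy, hx⟩
      · exact Or.inl ⟨by rw [hx], fun h => hy (by rw [← h, hx])⟩
      · exact Or.inl ⟨by rw [hy], fun h => hx (by rw [h, hy])⟩
  have hzero : ∀ e ∈ (Qgraph m n).edgeFinset, e ∉ spokes →
      emostarTerm (Qgraph m n) e = 0 := by
    intro e he hns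
    induction e using Sym2.ind with
    | _ x y =>
      rw [SimpleGraph.mem_edgeFinset, SimpleGraph.mem_edgeSet] at he
      rcases he with ⟨h1, h2⟩ | ⟨h1, h2, h3⟩
      · -- copy edge
        by_cases hx0 : x.2 = 0
        · exact absurd ((hmemsp x y).mpr (Or.inl ⟨Prod.ext h1 hx0,
            fun h => h2 (hx0.trans h.symm)⟩)) hns
        by_cases hy0 : y.2 = 0
        · exact absurd ((hmemsp x y).mpr (Or.inr ⟨Prod.ext h1.symm hy0,
            hx0⟩)) hns
        · refine emostarTerm_eq_zero_of_swap
            (copyAuto x.1 (Equiv.swap x.2 y.2)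
              (fun c => Equiv.swap_apply_self _ _ c)
              (fun c => swap_val0 hx0 hy0 c)) ?_ ?_
          · show copySwapFun x.1 (Equiv.swap x.2 y.2) x = y
            unfold copySwapFun
            rw [if_pos rfl]
            exact Prod.ext h1 (by rw [Equiv.swap_apply_left])
          · show copySwapFun x.1 (Equiv.swap x.2 y.2) y = x
            unfold copySwapFun
            rw [if_pos h1.symm]
            exact Prod.ext h1.symm (by rw [Equiv.swap_apply_right])
      · -- hub edge
        refine emostarTerm_eq_zero_of_swap (hubAuto (Equiv.swap x.1 y.1)) ?_ ?_
        · show ((Equiv.swap x.1 y.1) x.1, x.2) = y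
          exact Prod.ext (Equiv.swap_apply_left _ _)
            (((fv0 x.2).mp h1).trans ((fv0 y.2).mp h2).symm)
        · show ((Equiv.swap x.1 y.1) y.1, y.2) = x
          exact Prod.ext (Equiv.swap_apply_right _ _)
            (((fv0 y.2).mp h2).trans ((fv0 x.2).mp h1).symm)
  have hval : ∀ e ∈ spokes, emostarTerm (Qgraph m n) e = T := by
    intro e he
    induction e using Sym2.ind with
    | _ x y =>
      rw [hmemsp] at he
      obtain ⟨xi, xb⟩ := x
      obtain ⟨yi, yb⟩ := y
      rcases he with ⟨hx, hy⟩ | ⟨hy, hx⟩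
      · simp only [Prod.mk.injEq] at hx
        simp only at hy
        rw [show ((xi, xb) : Fin m × Fin n) = (yi, (0:Fin n)) from Prod.ext hx.1 hx.2]
        simp only [emostarTerm, Sym2.lift_mk]
        rw [countA yi yb hy, countB yi yb hy]
        omega
      · simp only [Prod.mk.injEq] at hy
        simp only at hx
        rw [show ((yi, yb) : Fin m × Fin n) = (xi, (0:Fin n)) from Prod.ext hy.1 hy.2,
          Sym2.eq_swap]
        simp only [emostarTerm, Sym2.lift_mk]
        rw [countA xi xb hx, countB xi xb hx]
        omega
  rw [← Finset.sum_subset hsub hzero, Finset.sum_congr rfl hval, Finset.sum_const, smul_eq_mul]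
  have hcard : spokes.card = m * (n - 1) := by
    rw [hspokes, Finset.card_image_of_injOn]
    · rw [Finset.card_filter, Fintype.sum_prod_type]
      have hinner : ∀ a : Fin m, (∑ b : Fin n, if (((a, b) : Fin m × Fin n).2 ≠ 0) then 1 else 0)
          = n - 1 := by
        intro a
        rw [← Finset.card_filter]
        rw [show (Finset.univ.filter fun b : Fin n => ((a, b) : Fin m × Fin n).2 ≠ 0)
            = Finset.univ.filter fun b : Fin n => b ≠ 0 from rfl]
        rw [Finset.filter_ne', Finset.card_erase_of_mem (Finset.mem_univ _),
          Finset.card_univ, Fintype.card_fin]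
      rw [Finset.sum_congr rfl (fun a _ => hinner a), Finset.sum_const, Finset.card_univ,
        Fintype.card_fin, smul_eq_mul]
    · intro a ha c hc hac
      rw [Finset.mem_coe, Finset.mem_filter] at ha hc
      rw [Sym2.eq_iff] at hac
      rcases hac with ⟨h1, h2⟩ | ⟨h1, h2⟩
      · exact h2
      · exact absurd ((Prod.ext_iff.mp h1).2.symm) hc.2
  rw [hcard]
  -- final arithmetic
  have e1 : 2 * m.choose 2 = m * (m - 1) := by
    rw [Nat.choose_two_right, Nat.mul_div_cancel']
    obtain ⟨m', rfl⟩ : ∃ m', m = m' + 1 := ⟨m - 1, by omega⟩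
    simp only [Nat.add_sub_cancel]
    have : Even ((m' + 1) * m') := by rw [Nat.mul_comm]; exact Nat.even_mul_succ_self m'
    exact this.two_dvd
  have e2 : 2 * n.choose 2 = n * (n - 1) := by
    rw [Nat.choose_two_right, Nat.mul_div_cancel']
    obtain ⟨n', rfl⟩ : ∃ n', n = n' + 1 := ⟨n - 1, by omega⟩
    simp only [Nat.add_sub_cancel]
    have : Even ((n' + 1) * n') := by rw [Nat.mul_comm]; exact Nat.even_mul_succ_self n'
    exact this.two_dvd
  symm
  apply Nat.div_eq_of_eq_mul_left (by norm_num)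
  rw [hT]
  obtain ⟨m', rfl⟩ : ∃ m', m = m' + 1 := ⟨m - 1, by omega⟩
  obtain ⟨n', rfl⟩ : ∃ n', n = n' + 1 := ⟨n - 1, by omega⟩
  simp only [Nat.add_sub_cancel] at e1 e2 ⊢
  have hsq : (n' + 1)^2 - (n' + 1) + (m' + 1) = (n' + 1) * n' + (m' + 1) := by
    have h : (n' + 1)^2 = (n' + 1) * n' + (n' + 1) := by ring
    rw [h, Nat.add_sub_cancel]
  rw [hsq]
  have key : ((m'+1) * n' * ((m'+1).choose 2 + m' * (n'+1).choose 2)) * 2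
      = (m'+1) * n' * ((2 * (m'+1).choose 2) + m' * (2 * (n'+1).choose 2)) := by ring
  rw [key, e1, e2]
  ring
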